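/- Let F be an oriented graph and let k ≥ 2. Suppose that there exists a tournament on k−1 vertices into which F admits no homomorphism, and that every tournament on k vertices contains a copy of F. Then for every n, exo(n, F) = e(T(n, k−1)), the number of edges of the Turán graph T(n, k−1). -/

import Mathlib

/-- An oriented graph `G` contains a copy of the oriented graph `F`. -/
def Copies {α β : Type*} (F : α → α → Prop) (G : β → β → Prop) : Prop :=
  ∃ f : α → β, Function.Injective f ∧ ∀ a b, F a b → G (f a) (f b)

/-- The oriented Turán number. -/
noncomputable def exo {α : Type*} (n : ℕ) (F : α → α → Prop) : ℕ :=
  sSup {m : ℕ | ∃ G : Fin n → Fin n → Prop,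
    (∀ v, ¬ G v v) ∧ (∀ u v, G u v → ¬ G v u) ∧
    ¬ Copies F G ∧ {p : Fin n × Fin n | G p.1 p.2}.ncard = m}

/-- A tournament: an asymmetric relation where any two distinct vertices are joined. -/
def IsTournament {α : Type*} (T : α → α → Prop) : Prop :=
  (∀ u v, T u v → ¬ T v u) ∧ ∀ u v, u ≠ v → T u v ∨ T v u

/-- The number of edges of the Turán graph `T(n,k)`. -/
noncomputable def eTuran (n k : ℕ) : ℕ := (SimpleGraph.turanGraph n k).edgeSet.ncard

lemma ncard_pairs_eq_edges {n : ℕ} (G : Fin n → Fin n → Prop)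
    (ha : ∀ u v, G u v → ¬ G v u) :
    {p : Fin n × Fin n | G p.1 p.2}.ncard = (SimpleGraph.fromRel G).edgeSet.ncard := by
  have himg : (SimpleGraph.fromRel G).edgeSet
      = (fun p : Fin n × Fin n => s(p.1, p.2)) '' {p : Fin n × Fin n | G p.1 p.2} := by
    ext e
    induction e using Sym2.ind with
    | _ u v =>
      simp only [SimpleGraph.mem_edgeSet, SimpleGraph.fromRel_adj, Set.mem_image,
        Set.mem_setOf_eq, Prod.exists]
      constructor
      · rintro ⟨hne, h | h⟩
        · exact ⟨u, v, h, rfl⟩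
        · exact ⟨v, u, h, Sym2.eq_swap⟩
      · rintro ⟨a, b, hab, he⟩
        rw [Sym2.eq_iff] at he
        rcases he with ⟨rfl, rfl⟩ | ⟨rfl, rfl⟩
        · exact ⟨fun h => ha _ _ hab (h ▸ hab), Or.inl hab⟩
        · exact ⟨fun h => ha _ _ hab (h ▸ hab), Or.inr hab⟩
  rw [himg, Set.ncard_image_of_injOn]
  rintro ⟨a, b⟩ hab ⟨c, d⟩ hcd he
  simp only [Set.mem_setOf_eq] at hab hcd
  simp only [Sym2.eq_iff] at he
  rcases he with ⟨rfl, rfl⟩ | ⟨rfl, rfl⟩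
  · rfl
  · exact absurd hcd (ha _ _ hab)

/-- if some tournament on `k-1` vertices admits no homomorphism from `F`
and every tournament on `k` vertices contains a copy of `F`, then
`exo(n,F) = e(T(n,k-1))` for every `n`. -/
theorem stmt_2 {α : Type*} [Fintype α] (F : α → α → Prop)
    (hirr : ∀ v, ¬ F v v) (hasym : ∀ u v, F u v → ¬ F v u)
    (k : ℕ) (hk : 2 ≤ k)
    (h1 : ∃ T : Fin (k - 1) → Fin (k - 1) → Prop, IsTournament T ∧
      ¬ ∃ f : α → Fin (k - 1), ∀ a b, F a b → T (f a) (f b))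
    (h2 : ∀ T : Fin k → Fin k → Prop, IsTournament T → Copies F T) :
    ∀ n : ℕ, exo n F = eTuran n (k - 1) := by
  classical
  intro n
  set r := k - 1 with hr
  obtain ⟨T, ⟨Tasym, Ttot⟩, hnoHom⟩ := h1
  have hk1 : 0 < r := by omega
  -- the modular map
  let m : Fin n → Fin r := fun v => ⟨(v : ℕ) % r, Nat.mod_lt _ hk1⟩
  -- the oriented Turán graph
  let G0 : Fin n → Fin n → Prop := fun u v => T (m u) (m v)
  have hG0irr : ∀ v, ¬ G0 v v := fun v h => Tasym _ _ h h
  have hG0asym : ∀ u v, G0 u v → ¬ G0 v u := fun u v h => Tasym _ _ h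
  have hG0free : ¬ Copies F G0 := by
    rintro ⟨f, -, hhom⟩
    exact hnoHom ⟨fun a => m (f a), fun a b hab => hhom a b hab⟩
  have hG0eq : SimpleGraph.fromRel G0 = SimpleGraph.turanGraph n r := by
    ext u v
    simp only [SimpleGraph.fromRel_adj, SimpleGraph.turanGraph, G0]
    constructor
    · rintro ⟨hne, h | h⟩ hmod
      · have : m u = m v := Fin.ext hmod
        exact Tasym _ _ h (this ▸ h)
      · have : m u = m v := Fin.ext hmod
        exact Tasym _ _ h (this ▸ h)
    · intro h
      have hmne : m u ≠ m v := fun he => h (congrArg Fin.val he)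
      refine ⟨fun he => hmne (he ▸ rfl), Ttot _ _ hmne⟩
  have hG0card : {p : Fin n × Fin n | G0 p.1 p.2}.ncard = eTuran n r := by
    rw [ncard_pairs_eq_edges G0 hG0asym, hG0eq]; rfl
  -- membership
  have hmem : eTuran n r ∈ {m : ℕ | ∃ G : Fin n → Fin n → Prop,
      (∀ v, ¬ G v v) ∧ (∀ u v, G u v → ¬ G v u) ∧
      ¬ Copies F G ∧ {p : Fin n × Fin n | G p.1 p.2}.ncard = m} :=
    ⟨G0, hG0irr, hG0asym, hG0free, hG0card⟩
  -- upper bound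
  have hub : ∀ c ∈ {m : ℕ | ∃ G : Fin n → Fin n → Prop,
      (∀ v, ¬ G v v) ∧ (∀ u v, G u v → ¬ G v u) ∧
      ¬ Copies F G ∧ {p : Fin n × Fin n | G p.1 p.2}.ncard = m}, c ≤ eTuran n r := by
    rintro c ⟨G, hGi, hGa, hGF, rfl⟩
    set H := SimpleGraph.fromRel G with hH
    have hcf : H.CliqueFree (r + 1) := by
      have hrk : r + 1 = k := by omega
      rw [hrk]
      intro t ht
      have hcard : t.card = k := ht.2
      let e : {x // x ∈ t} ≃ Fin k := t.equivFinOfCardEq hcard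
      let g : Fin k → Fin n := fun i => (e.symm i : Fin n)
      have hginj : Function.Injective g := by
        intro i j hij
        exact e.symm.injective (Subtype.ext hij)
      let T' : Fin k → Fin k → Prop := fun i j => G (g i) (g j)
      have hT'tour : IsTournament T' := by
        constructor
        · exact fun i j h => hGa _ _ h
        · intro i j hij
          have hne : g i ≠ g j := fun h => hij (hginj h)
          have hadj : H.Adj (g i) (g j) := ht.1 (e.symm i).2 (e.symm j).2 hne
          rw [hH, SimpleGraph.fromRel_adj] at hadj
          exact hadj.2
      obtain ⟨f, hfinj, hfhom⟩ := h2 T' hT'tour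
      exact hGF ⟨fun a => g (f a), hginj.comp hfinj, fun a b hab => hfhom a b hab⟩
    have hmax := (SimpleGraph.isTuranMaximal_turanGraph (n := n) hk1).2 hcf
    rw [ncard_pairs_eq_edges G hGa]
    rw [eTuran]
    rw [Set.ncard_eq_toFinset_card', Set.ncard_eq_toFinset_card']
    simpa [SimpleGraph.edgeFinset] using hmax
  have hbdd : BddAbove {m : ℕ | ∃ G : Fin n → Fin n → Prop,
      (∀ v, ¬ G v v) ∧ (∀ u v, G u v → ¬ G v u) ∧
      ¬ Copies F G ∧ {p : Fin n × Fin n | G p.1 p.2}.ncard = m} := ⟨eTuran n r, hub⟩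
  exact le_antisymm (csSup_le ⟨_, hmem⟩ hub) (le_csSup hbdd hmem)
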